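/- Let L be a Lie subalgebra of g((t)) (g finite-dimensional over a field of characteristic 0) such that g((t)) = L + g[[t]] as vector spaces. Then g ⊗ k[[t]] ⊆ K·L where K·L denotes the k((t))-span of L; that is, the k((t))-span of L is all of g((t)). -/

import Mathlib

open scoped TensorProduct

set_option synthInstance.maxHeartbeats 400000
set_option maxHeartbeats 1000000

/- As in the geometric construction, we use the `k`-module structure on
`k((t)) = LaurentSeries k` coming from its `k`-algebra structure. -/
attribute [-instance] HahnSeries.instModule HahnSeries.instSMul HahnSeries.instSMulZeroClass

/-- if `L` is a Lie subalgebra of `g((t)) = k((t)) ⊗ g` (with `g`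
finite-dimensional) such that `g((t)) = L + g[[t]]`, then `g ⊗ k[[t]]` is contained in the
`k((t))`-span of `L`; that is, the `k((t))`-span of `L` is all of `g((t))`. -/
theorem stmt17 (k : Type*) [Field k] [CharZero k]
    (g : Type*) [LieRing g] [LieAlgebra k g] [FiniteDimensional k g]
    (L : Submodule k (LaurentSeries k ⊗[k] g))
    (hLie : ∀ a ∈ L, ∀ b ∈ L, ⁅a, b⁆ ∈ L)
    (PS : Submodule k (LaurentSeries k ⊗[k] g))
    (hPS : PS = Submodule.span k {z : LaurentSeries k ⊗[k] g |
      ∃ (f : PowerSeries k) (x : g), z = (HahnSeries.ofPowerSeries ℤ k f) ⊗ₜ[k] x})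
    (hsum : L ⊔ PS = ⊤) :
    PS ≤ Submodule.restrictScalars k
        (Submodule.span (LaurentSeries k) (L : Set (LaurentSeries k ⊗[k] g))) ∧
    Submodule.span (LaurentSeries k) (L : Set (LaurentSeries k ⊗[k] g)) = ⊤ := by
  suffices hS : Submodule.span (LaurentSeries k) (L : Set (LaurentSeries k ⊗[k] g)) = ⊤ by
    refine ⟨?_, hS⟩
    rw [hS]
    exact le_top
  by_contra hS
  obtain ⟨φ, hφ0, hφ⟩ := Submodule.exists_dual_map_eq_bot_of_lt_top
    (p := Submodule.span (LaurentSeries k) (L : Set (LaurentSeries k ⊗[k] g))) (lt_top_iff_ne_top.mpr hS) inferInstance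
  -- φ vanishes on L
  have hφL : ∀ a ∈ L, φ a = 0 := by
    intro a ha
    have : φ a ∈ (Submodule.span (LaurentSeries k) (L : Set (LaurentSeries k ⊗[k] g))).map φ :=
      Submodule.mem_map_of_mem (Submodule.subset_span ha)
    rwa [hφ, Submodule.mem_bot] at this
  -- coefficient of k-scalar multiplication
  have hsmulcoeff : ∀ (r : k) (c : LaurentSeries k) (m : ℤ), (r • c).coeff m = r * c.coeff m := by
    intro r c m
    rw [Algebra.smul_def]
    rw [show (algebraMap k (LaurentSeries k)) r = HahnSeries.single 0 r from ?_,
      HahnSeries.coeff_single_zero_mul]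
    ext n
    simp [HahnSeries.algebraMap_apply', PowerSeries.algebraMap_apply,
      HahnSeries.ofPowerSeries_C, HahnSeries.C_apply, HahnSeries.coeff_single]
  -- coefficient of a finite sum
  have hsumcoeff : ∀ {ι : Type} (s : Finset ι) (f : ι → LaurentSeries k) (m : ℤ),
      (s.sum f).coeff m = s.sum fun i => (f i).coeff m := by
    intro ι s f m
    exact map_sum (HahnSeries.coeff.addMonoidHom m) f s
  -- the k-linear map x ↦ φ (1 ⊗ x)
  set ψ : g →ₗ[k] (LaurentSeries k) :=
    (φ.restrictScalars k).comp ((TensorProduct.mk k (LaurentSeries k) g) 1) with hψdef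
  have hψapp : ∀ x : g, ψ x = φ ((1 : LaurentSeries k) ⊗ₜ[k] x) := fun x => rfl
  -- a basis of g
  set b := Module.finBasis k g with hb
  set o : Fin (Module.finrank k g) → ℕ := fun i => (ψ (b i)).order.natAbs with ho
  set N : ℤ := -((Finset.univ.sup o : ℕ) : ℤ) with hN
  have hNb : ∀ i, ∀ m : ℤ, m < N → (ψ (b i)).coeff m = 0 := by
    intro i m hm
    apply HahnSeries.coeff_eq_zero_of_lt_order
    have h1 : o i ≤ Finset.univ.sup o := Finset.le_sup (Finset.mem_univ i)
    have h2 : o i = (ψ (b i)).order.natAbs := rfl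
    omega
  -- uniform bound for all of g
  have hNψ : ∀ (x : g), ∀ m : ℤ, m < N → (ψ x).coeff m = 0 := by
    intro x m hm
    have hx := b.sum_repr x
    rw [← hx, map_sum, hsumcoeff]
    refine Finset.sum_eq_zero fun i _ => ?_
    rw [map_smul, hsmulcoeff, hNb i m hm, mul_zero]
  -- φ of any element of PS has vanishing coefficients below N
  have hT : ∀ z ∈ PS, ∀ m : ℤ, m < N → (φ z).coeff m = 0 := by
    rw [hPS]
    intro z hz
    induction hz using Submodule.span_induction with
    | mem z hzmem =>
      obtain ⟨f, x, rfl⟩ := hzmem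
      intro m hm
      have hrw : (HahnSeries.ofPowerSeries ℤ k f) ⊗ₜ[k] x
          = (HahnSeries.ofPowerSeries ℤ k f) • ((1 : LaurentSeries k) ⊗ₜ[k] x) := by
        rw [TensorProduct.smul_tmul', smul_eq_mul, mul_one]
      rw [hrw, map_smul, smul_eq_mul]
      by_contra hne
      have hmem : m ∈ ((HahnSeries.ofPowerSeries ℤ k f : LaurentSeries k) *
          φ ((1 : LaurentSeries k) ⊗ₜ[k] x)).support := hne
      obtain ⟨i, hi, j, hj, hij⟩ := HahnSeries.support_mul_subset hmem
      have hij' : i + j = m := hij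
      have hi0 : (0 : ℤ) ≤ i := by
        by_contra hlt
        push_neg at hlt
        apply hi
        rw [HahnSeries.ofPowerSeries_apply]
        apply HahnSeries.embDomain_notin_range
        rintro ⟨n, rfl⟩
        simp at hlt
        omega
      have hjN : N ≤ j := by
        by_contra hlt
        push_neg at hlt
        exact hj (hNψ x j hlt)
      omega
    | zero => intro m hm; simp
    | add y z _ _ hy hz =>
      intro m hm
      rw [map_add, HahnSeries.coeff_add, hy m hm, hz m hm, add_zero]
    | smul r z _ hz =>
      intro m hm
      rw [LinearMap.map_smul_of_tower, hsmulcoeff, hz m hm, mul_zero]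
  -- get an element mapping to single (N-1) 1
  obtain ⟨u, hu⟩ : ∃ u, φ u ≠ 0 := by
    by_contra h
    push_neg at h
    exact hφ0 (LinearMap.ext fun u => by simp [h u])
  set z := ((HahnSeries.single (N - 1) 1 : LaurentSeries k) * (φ u)⁻¹) • u with hz
  have hφz : φ z = HahnSeries.single (N - 1) 1 := by
    rw [hz, map_smul, smul_eq_mul, mul_assoc, inv_mul_cancel₀ hu, mul_one]
  have hztop : z ∈ L ⊔ PS := by rw [hsum]; exact Submodule.mem_top
  obtain ⟨a, ha, c, hc, hac⟩ := Submodule.mem_sup.mp hztop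
  have : (φ z).coeff (N - 1) = 0 := by
    rw [← hac, map_add, HahnSeries.coeff_add, hφL a ha, hT c hc (N - 1) (by omega),
      HahnSeries.coeff_zero, add_zero]
  rw [hφz, HahnSeries.coeff_single_same] at this
  exact one_ne_zero this
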